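/- Let q be a prime power and K a finite field containing F_q. For every nonzero B ∈ K, the polynomial X^{q+1} − BX + B splits completely into linear factors over K if and only if there exists u ∈ K with u^{q²} ≠ u such that B = (u − u^{q²})^{q+1} / (u − u^q)^{q²+1}. -/

import Mathlib

open Polynomial

/-- Key algebraic identity for the forward direction: if `x, y, z` are roots of
`X^{q+1} - BX + B` (written as `t * t^q = B*(t-1)`), then the cross identity holds. -/
private lemma key_cross {K : Type} [Field K] {q : ℕ} {B x y z : K}
    (hx : x * x ^ q = B * (x - 1)) (hy : y * y ^ q = B * (y - 1))
    (hz : z * z ^ q = B * (z - 1))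
    (hx0 : x ≠ 0) (hy0 : y ≠ 0) (hz0 : z ≠ 0) :
    (z ^ q - x ^ q) * x * (y - z) = (y ^ q - z ^ q) * y * (z - x) := by
  have hxq : x ^ q = B * (x - 1) / x := by rw [eq_div_iff hx0]; linear_combination hx
  have hyq : y ^ q = B * (y - 1) / y := by rw [eq_div_iff hy0]; linear_combination hy
  have hzq : z ^ q = B * (z - 1) / z := by rw [eq_div_iff hz0]; linear_combination hz
  rw [hxq, hyq, hzq]
  field_simp
  ring

/-- Characterisation of the `B` for which `X^{q+1} - BX + B` splits completely over a
finite field `K` containing `F_q`. -/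
theorem stmt_1 (q : ℕ) (hq : IsPrimePow q)
    (K : Type) [Field K] [Fintype K]
    (Fq : Subfield K) (hFq : Nat.card Fq = q)
    (B : K) (hB : B ≠ 0) :
    Splits (X ^ (q + 1) - C B * X + C B) ↔
      ∃ u : K, u ^ q ^ 2 ≠ u ∧
        B = (u - u ^ q ^ 2) ^ (q + 1) / (u - u ^ q) ^ (q ^ 2 + 1) := by
  classical
  have hq2 : 2 ≤ q := hq.two_le
  obtain ⟨p, k, hpp, hk, hpk⟩ := hq
  have hp : p.Prime := Nat.prime_iff.mpr hpp
  -- characteristic facts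
  have hcard : Fintype.card ↥Fq = q := by rw [← Nat.card_eq_fintype_card]; exact hFq
  have hqK : ((q : ℕ) : K) = 0 := by
    have h0 : ((q : ℕ) : ↥Fq) = 0 := by
      rw [← hcard]; exact FiniteField.cast_card_eq_zero ↥Fq
    have := congrArg (Fq.subtype) h0
    simpa using this
  have hr : CharP K (ringChar K) := ringChar.charP K
  have hrp : (ringChar K).Prime := CharP.char_is_prime K (ringChar K)
  have hrdvd : ringChar K ∣ q := (CharP.cast_eq_zero_iff K (ringChar K) q).mp hqK
  have hrp' : ringChar K = p := by
    have h1 : ringChar K ∣ p := hrp.dvd_of_dvd_pow (hpk ▸ hrdvd)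
    exact (Nat.prime_dvd_prime_iff_eq hrp hp).mp h1
  haveI : Fact p.Prime := ⟨hp⟩
  haveI hcp : CharP K p := hrp' ▸ hr
  have frob_add : ∀ a b : K, (a + b) ^ q = a ^ q + b ^ q := by
    intro a b; rw [← hpk]; exact add_pow_char_pow a b p k
  have frob_sub : ∀ a b : K, (a - b) ^ q = a ^ q - b ^ q := by
    intro a b; rw [← hpk]; exact sub_pow_char_pow a b k
  -- facts about the subfield Fq
  have hFqpow : ∀ a : K, a ∈ Fq → a ^ q = a := by
    intro a ha
    have h1 : (⟨a, ha⟩ : ↥Fq) ^ Fintype.card ↥Fq = ⟨a, ha⟩ := FiniteField.pow_card _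
    rw [hcard] at h1
    have := congrArg (Fq.subtype) h1
    simpa using this
  have hdXq : (X ^ q - X : K[X]).natDegree = q := by
    rw [natDegree_sub_eq_left_of_natDegree_lt, natDegree_X_pow]
    rw [natDegree_X, natDegree_X_pow]; omega
  have hXqne : (X ^ q - X : K[X]) ≠ 0 := by
    intro h; rw [h, natDegree_zero] at hdXq; omega
  have hc1 : (Set.toFinset (Fq : Set K)).card = q := by
    rw [Set.toFinset_card, ← Nat.card_eq_fintype_card]; exact hFq
  have hmem : ∀ t : K, t ^ q = t → t ∈ Fq := by
    intro t ht
    have hsub : Set.toFinset (Fq : Set K) ⊆ (X ^ q - X : K[X]).roots.toFinset := by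
      intro a ha
      rw [Set.mem_toFinset] at ha
      rw [Multiset.mem_toFinset, mem_roots hXqne]
      simp only [IsRoot, eval_sub, eval_pow, eval_X]
      rw [hFqpow a ha, sub_self]
    have hWcard : (X ^ q - X : K[X]).roots.toFinset.card ≤ q := by
      exact le_trans (Multiset.toFinset_card_le _) (le_of_le_of_eq (card_roots' _) hdXq)
    have heq : Set.toFinset (Fq : Set K) = (X ^ q - X : K[X]).roots.toFinset :=
      Finset.eq_of_subset_of_card_le hsub (by rw [hc1]; exact hWcard)
    have htW : t ∈ (X ^ q - X : K[X]).roots.toFinset := by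
      rw [Multiset.mem_toFinset, mem_roots hXqne]
      simp only [IsRoot, eval_sub, eval_pow, eval_X]
      rw [ht, sub_self]
    rw [← heq, Set.mem_toFinset] at htW
    exact htW
  -- facts about P
  set P : K[X] := X ^ (q + 1) - C B * X + C B with hPdef
  have hev : ∀ t : K, P.eval t = t ^ (q + 1) - B * t + B := by
    intro t; simp [hPdef]
  have hPdeg : P.natDegree = q + 1 := by
    have h1 : P = X ^ (q + 1) - (C B * X - C B) := by rw [hPdef]; ring
    rw [h1, natDegree_sub_eq_left_of_natDegree_lt, natDegree_X_pow]
    rw [natDegree_X_pow]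
    refine lt_of_le_of_lt (natDegree_sub_le _ _) ?_
    have h2 : (C B * X : K[X]).natDegree ≤ 1 := by
      refine le_trans (natDegree_C_mul_le _ _) ?_; rw [natDegree_X]
    have h3 : (C B : K[X]).natDegree = 0 := natDegree_C _
    omega
  have hPne : P ≠ 0 := by
    intro h; rw [h, natDegree_zero] at hPdeg; omega
  constructor
  · -- forward direction
    intro hs
    have hcardroots : Multiset.card P.roots = q + 1 := by
      rw [splits_iff_card_roots.mp hs, hPdeg]
    -- separability
    have hq1K : ((q + 1 : ℕ) : K) = 1 := by push_cast [hqK]; ring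
    have hder : derivative P = X ^ q - C B := by
      rw [hPdef]
      simp only [derivative_add, derivative_sub, derivative_mul, derivative_C,
        derivative_X, derivative_X_pow]
      rw [Nat.add_sub_cancel, hq1K]
      simp
    have hCB : (C B⁻¹ : K[X]) * C B = 1 := by
      rw [← C_mul, inv_mul_cancel₀ hB, C_1]
    have hsep : P.Separable := by
      refine ⟨C B⁻¹, -(C B⁻¹) * X, ?_⟩
      rw [hder, hPdef]
      have hps : (X : K[X]) ^ (q + 1) = X ^ q * X := by rw [pow_succ]
      rw [hps]
      linear_combination hCB
    have hnodup := nodup_roots hsep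
    set F : Finset K := P.roots.toFinset with hF
    have hFcard : F.card = q + 1 := by
      rw [hF, Multiset.toFinset_card_eq_card_iff_nodup.mpr hnodup, hcardroots]
    -- extract three distinct roots
    obtain ⟨x, hxF⟩ := Finset.card_pos.mp (by omega : 0 < F.card)
    obtain ⟨y, hyF'⟩ := Finset.card_pos.mp
      (by rw [Finset.card_erase_of_mem hxF]; omega : 0 < (F.erase x).card)
    obtain ⟨z, hzF'⟩ := Finset.card_pos.mp
      (by rw [Finset.card_erase_of_mem hyF', Finset.card_erase_of_mem hxF]; omega :
        0 < ((F.erase x).erase y).card)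
    have hyx : y ≠ x := Finset.ne_of_mem_erase hyF'
    have hyF : y ∈ F := Finset.mem_of_mem_erase hyF'
    have hzy : z ≠ y := Finset.ne_of_mem_erase hzF'
    have hzF'' : z ∈ F.erase x := Finset.mem_of_mem_erase hzF'
    have hzx : z ≠ x := Finset.ne_of_mem_erase hzF''
    have hzF : z ∈ F := Finset.mem_of_mem_erase hzF''
    -- root equations
    have hroot : ∀ t ∈ F, t * t ^ q = B * (t - 1) := by
      intro t ht
      rw [hF, Multiset.mem_toFinset, mem_roots hPne] at ht
      have h1 : P.eval t = 0 := ht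
      rw [hev t, pow_succ] at h1
      linear_combination h1
    have h0 : ∀ t ∈ F, t ≠ 0 := by
      intro t ht h
      have h1 := hroot t ht
      rw [h] at h1
      simp only [zero_mul, zero_sub, mul_neg, mul_one] at h1
      exact hB (by linear_combination h1)
    have hne1 : ∀ t ∈ F, t ≠ 1 := by
      intro t ht h
      have h1 := hroot t ht
      rw [h] at h1
      simp at h1
    have hx0 := h0 x hxF
    have hy0 := h0 y hyF
    have hz0 := h0 z hzF
    have hx1 : x - 1 ≠ 0 := sub_ne_zero.mpr (hne1 x hxF)
    have hxy : x - y ≠ 0 := sub_ne_zero.mpr (Ne.symm hyx)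
    have hyz : y - z ≠ 0 := sub_ne_zero.mpr (Ne.symm hzy)
    set u : K := (z - x) / (y - z) with hu
    have hu0 : u ≠ 0 := div_ne_zero (sub_ne_zero.mpr hzx) hyz
    have hu1 : u ^ q * x = u * y := by
      have hcore := key_cross (hroot x hxF) (hroot y hyF) (hroot z hzF) hx0 hy0 hz0
      rw [hu, div_pow, div_mul_eq_mul_div, div_mul_eq_mul_div,
        div_eq_div_iff (pow_ne_zero q hyz) hyz, frob_sub, frob_sub]
      linear_combination hcore
    have hxq : x ^ q = B * (x - 1) / x := by
      rw [eq_div_iff hx0]; linear_combination hroot x hxF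
    have hyq : y ^ q = B * (y - 1) / y := by
      rw [eq_div_iff hy0]; linear_combination hroot y hyF
    have huq : u ^ q = u * y / x := by
      rw [eq_div_iff hx0]; linear_combination hu1
    have huq2 : u ^ q ^ 2 = u * (y - 1) / (x - 1) := by
      rw [pow_two q, pow_mul, huq, div_pow, mul_pow, huq, hxq, hyq]
      field_simp
    have hune : u ^ q ^ 2 ≠ u := by
      rw [huq2]
      intro h
      have h2 : u * (y - 1) = u * (x - 1) := by
        rw [div_eq_iff hx1] at h; linear_combination h
      have h3 : y - 1 = x - 1 := mul_left_cancel₀ hu0 h2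
      exact hyx (by linear_combination h3)
    refine ⟨u, hune, ?_⟩
    have hNeq : u - u ^ q ^ 2 = u * (x - y) / (x - 1) := by
      rw [huq2]; field_simp; ring
    have hDeq : u - u ^ q = u * (x - y) / x := by
      rw [huq]; field_simp
    have hDq : (u * (x - y) / x) ^ q = u * (x - y) / x / (x - 1) := by
      rw [div_pow, mul_pow, frob_sub, huq, hxq, hyq]
      field_simp
      ring
    have hCq : (x - 1) ^ q = (B * (x - 1) - x) / x := by
      rw [frob_sub, one_pow, hxq]
      field_simp
    have hCne : B * (x - 1) - x ≠ 0 := by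
      intro h
      have h1 := hCq
      rw [h, zero_div] at h1
      exact pow_ne_zero q hx1 h1
    have hNq : (u * (x - y) / (x - 1)) ^ q = u * B * (x - y) / (x * (B * (x - 1) - x)) := by
      rw [div_pow, mul_pow, frob_sub, huq, hxq, hyq, hCq]
      field_simp
      ring
    have hDqq : ((u * (x - y) / x) ^ q) ^ q
        = u * (x - y) / ((x - 1) * (B * (x - 1) - x)) := by
      rw [hDq, div_pow, hDq, hCq]
      field_simp
    rw [hNeq, hDeq, pow_succ, pow_succ, pow_two q, pow_mul, hNq, hDqq]
    field_simp
  · -- backward direction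
    rintro ⟨u, hu2, hBdef⟩
    have hdu : u - u ^ q ≠ 0 := by
      intro h
      apply hu2
      have h1 : u ^ q = u := by linear_combination -h
      rw [pow_two q, pow_mul, h1, h1]
    have hnu : u - u ^ q ^ 2 ≠ 0 := sub_ne_zero.mpr (fun h => hu2 h.symm)
    obtain ⟨A, hA⟩ : ∃ A : K, A = u - u ^ q ^ 2 := ⟨_, rfl⟩
    obtain ⟨E, hE⟩ : ∃ E : K, E = u - u ^ q := ⟨_, rfl⟩
    have hAne : A ≠ 0 := by rw [hA]; exact hnu
    have hEne : E ≠ 0 := by rw [hE]; exact hdu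
    have huqq : (u ^ q) ^ q = u ^ q ^ 2 := by rw [← pow_mul, ← pow_two q]
    have hEq : E ^ q = u ^ q - u ^ q ^ 2 := by rw [hE, frob_sub, huqq]
    have hAE : A = E + E ^ q := by rw [hA, hEq, hE]; ring
    have hEqne : E ^ q ≠ 0 := pow_ne_zero _ hEne
    have hEqqne : (E ^ q) ^ q ≠ 0 := pow_ne_zero _ hEqne
    obtain ⟨g, hgdef⟩ : ∃ g : K → K, ∀ w, g w = A * w ^ q / (w * E ^ q) :=
      ⟨_, fun _ => rfl⟩
    have huFq : u ∉ Fq := by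
      intro h
      apply hu2
      have h2 := hFqpow u h
      rw [pow_two q, pow_mul, h2, h2]
    have hua0 : ∀ a : K, a ∈ Fq → u + a ≠ 0 := by
      intro a ha h
      apply huFq
      have h2 : u = -a := by linear_combination h
      rw [h2]
      exact Fq.neg_mem ha
    -- the key identity implies being a root
    have hBalt : B = A ^ q * A / ((E ^ q) ^ q * E) := by
      rw [hBdef, ← hA, ← hE, pow_succ, pow_succ, pow_two q, pow_mul]
    have hKI : ∀ w : K, w ≠ 0 →
        E * (w ^ q) ^ q - A * w ^ q + E ^ q * w = 0 → P.eval (g w) = 0 := by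
      intro w hw hid
      have hwqne : w ^ q ≠ 0 := pow_ne_zero _ hw
      have hw2 : (w ^ q) ^ q = (A * w ^ q - E ^ q * w) / E := by
        rw [eq_div_iff hEne]; linear_combination hid
      rw [hev, pow_succ]
      have hgq : (g w) ^ q = A ^ q * ((w ^ q) ^ q) / (w ^ q * (E ^ q) ^ q) := by
        rw [hgdef, div_pow, mul_pow, mul_pow]
      rw [hgq, hw2, hgdef, hBalt]
      have hr1 : w ^ 2 * w⁻¹ ^ 2 = 1 := by
        rw [← mul_pow, mul_inv_cancel₀ hw, one_pow]
      have hr2 : w ^ q * w⁻¹ ^ q = 1 := by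
        rw [← mul_pow, mul_inv_cancel₀ hw, one_pow]
      have hr3 : E ^ 2 * E⁻¹ ^ 2 = 1 := by
        rw [← mul_pow, mul_inv_cancel₀ hEne, one_pow]
      have hr4 : E ^ (q * 2) * E⁻¹ ^ (q * 2) = 1 := by
        rw [← mul_pow, mul_inv_cancel₀ hEne, one_pow]
      have hr5 : E ^ (q ^ 2 * 2) * E⁻¹ ^ (q ^ 2 * 2) = 1 := by
        rw [← mul_pow, mul_inv_cancel₀ hEne, one_pow]
      field_simp [hw, hwqne, hEne, hEqne, hEqqne]
      ring
    -- the key identity for the candidate roots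
    have hKIa : ∀ a : K, a ∈ Fq →
        E * ((u + a) ^ q) ^ q - A * (u + a) ^ q + E ^ q * (u + a) = 0 := by
      intro a ha
      rw [frob_add u a, hFqpow a ha, frob_add (u ^ q) a, hFqpow a ha, huqq,
        hA, hEq, hE]
      ring
    have hKI1 : E * ((1 : K) ^ q) ^ q - A * (1 : K) ^ q + E ^ q * 1 = 0 := by
      rw [one_pow, one_pow, hAE]; ring
    -- injectivity facts
    have hgfix : ∀ v w : K, v ≠ 0 → w ≠ 0 → g v = g w → v ^ q * w = v * w ^ q := by
      intro v w hv hw h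
      rw [hgdef, hgdef] at h
      have h1 := (div_eq_div_iff (mul_ne_zero hv hEqne) (mul_ne_zero hw hEqne)).mp h
      have h2 : (A * E ^ q) * (v ^ q * w) = (A * E ^ q) * (v * w ^ q) := by
        linear_combination h1
      exact mul_left_cancel₀ (mul_ne_zero hAne hEqne) h2
    have hginj : ∀ a : K, a ∈ Fq → ∀ b : K, b ∈ Fq →
        g (u + a) = g (u + b) → a = b := by
      intro a ha b hb h
      have hva := hua0 a ha
      have hvb := hua0 b hb
      have h1 := hgfix (u + a) (u + b) hva hvb h
      have hcq : ((u + a) / (u + b)) ^ q = (u + a) / (u + b) := by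
        rw [div_pow, div_eq_div_iff (pow_ne_zero q hvb) hvb]
        linear_combination h1
      have hcFq : (u + a) / (u + b) ∈ Fq := hmem _ hcq
      have hceq : u + a = ((u + a) / (u + b)) * (u + b) := (div_mul_cancel₀ _ hvb).symm
      by_cases hcone : (u + a) / (u + b) = 1
      · rw [hcone, one_mul] at hceq
        exact add_left_cancel hceq
      · exfalso
        apply huFq
        have h1c : 1 - (u + a) / (u + b) ≠ 0 :=
          sub_ne_zero.mpr (fun hh => hcone hh.symm)
        have hueq : u = (((u + a) / (u + b)) * b - a) / (1 - (u + a) / (u + b)) := by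
          rw [eq_div_iff h1c]; linear_combination hceq
        rw [hueq]
        exact Fq.div_mem (Fq.sub_mem (Fq.mul_mem hcFq hb) ha)
          (Fq.sub_mem Fq.one_mem hcFq)
    have hg1ne : ∀ a : K, a ∈ Fq → g (u + a) ≠ g 1 := by
      intro a ha h
      have hva := hua0 a ha
      have h1 := hgfix (u + a) 1 hva one_ne_zero h
      rw [one_pow, mul_one, mul_one] at h1
      have h2 : u + a ∈ Fq := hmem _ h1
      apply huFq
      have h3 : u = (u + a) - a := by ring
      rw [h3]
      exact Fq.sub_mem h2 ha
    -- build the finset of q+1 roots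
    have hTcard : ((Set.toFinset (Fq : Set K)).image (fun a => g (u + a))).card = q := by
      rw [Finset.card_image_of_injOn, hc1]
      intro a ha b hb hab
      rw [Finset.mem_coe, Set.mem_toFinset] at ha hb
      exact hginj a ha b hb hab
    have hg1T : g 1 ∉ (Set.toFinset (Fq : Set K)).image (fun a => g (u + a)) := by
      intro h
      obtain ⟨a, ha, hfa⟩ := Finset.mem_image.mp h
      rw [Set.mem_toFinset] at ha
      exact hg1ne a ha hfa
    have hScard : (insert (g 1) ((Set.toFinset (Fq : Set K)).image (fun a => g (u + a)))).card
        = q + 1 := by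
      rw [Finset.card_insert_of_notMem hg1T, hTcard]
    have hSsub : (insert (g 1) ((Set.toFinset (Fq : Set K)).image (fun a => g (u + a))))
        ⊆ P.roots.toFinset := by
      intro t ht
      rw [Finset.mem_insert] at ht
      rw [Multiset.mem_toFinset, mem_roots hPne]
      rcases ht with h | h
      · rw [h]
        exact hKI 1 one_ne_zero hKI1
      · obtain ⟨a, ha, hfa⟩ := Finset.mem_image.mp h
        rw [Set.mem_toFinset] at ha
        rw [← hfa]
        exact hKI (u + a) (hua0 a ha) (hKIa a ha)
    apply splits_iff_card_roots.mpr
    have h1 : q + 1 ≤ P.roots.toFinset.card := by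
      rw [← hScard]; exact Finset.card_le_card hSsub
    have h2 := Multiset.toFinset_card_le P.roots
    have h3 := card_roots' P
    omega
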